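/- Fix j ∈ ℝ⁴, let g be a symmetric invertible 4×4 real matrix with det g < 0 and jᵀ g j < 0, let n(g) = √(−jᵀ g j)/√(−det g), u = j/(√(−det g) n(g)), and let e : ℝ → ℝ be differentiable at n(g). Define the Lagrangian density L(g) = −√(−det g) · n(g) · e(n(g)). Then for every symmetric 4×4 matrix H, (d/dt)|_{t=0} L(g + tH) = (1/2) Σ_{μν} T^{μν} H_{μν}, where T^{μν} = √(−det g) ((ρ + p) u^μ u^ν + p (g⁻¹)^{μν}) with ρ = n e(n) and p = n² e'(n). That is, the variation of the barotropic-fluid Lagrangian with respect to the metric yields the ideal-fluid stress-energy tensor density. -/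

import Mathlib

open scoped BigOperators

/-- The rest mole density `n(g) = √(−Σ g_{μν} j^μ j^ν)/√(−det g)`. -/
noncomputable def nOf (j : Fin 4 → ℝ) (g : Matrix (Fin 4) (Fin 4) ℝ) : ℝ :=
  Real.sqrt (-(∑ μ, ∑ ν, g μ ν * j μ * j ν)) / Real.sqrt (-g.det)

/-- The four-velocity `u^μ = j^μ/(√(−det g) n(g))`. -/
noncomputable def uOf (j : Fin 4 → ℝ) (g : Matrix (Fin 4) (Fin 4) ℝ) (μ : Fin 4) : ℝ :=
  j μ / (Real.sqrt (-g.det) * nOf j g)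

/-- Variation of the barotropic-fluid Lagrangian density `L(g) = −√(−det g) n(g) e(n(g))`
with respect to the metric yields the ideal-fluid stress-energy tensor density:
`(d/dt)|₀ L(g + tH) = (1/2) Σ_{μν} T^{μν} H_{μν}` with
`T^{μν} = √(−det g) ((ρ + p) u^μ u^ν + p (g⁻¹)^{μν})`, `ρ = n e(n)`, `p = n² e'(n)`. -/
theorem variation_of_fluid_lagrangian (j : Fin 4 → ℝ) (g : Matrix (Fin 4) (Fin 4) ℝ)
    (hsymm : g.IsSymm) (hinv : IsUnit g.det) (hdet : g.det < 0)
    (htl : ∑ μ, ∑ ν, g μ ν * j μ * j ν < 0)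
    (e : ℝ → ℝ) (he : DifferentiableAt ℝ e (nOf j g))
    (H : Matrix (Fin 4) (Fin 4) ℝ) (hH : H.IsSymm) :
    deriv (fun t : ℝ =>
        -Real.sqrt (-(g + t • H).det) * nOf j (g + t • H) * e (nOf j (g + t • H))) 0
      = (1 / 2) * ∑ μ, ∑ ν,
          (Real.sqrt (-g.det) *
            ((nOf j g * e (nOf j g) + (nOf j g) ^ 2 * deriv e (nOf j g)) *
                uOf j g μ * uOf j g ν
              + (nOf j g) ^ 2 * deriv e (nOf j g) * g⁻¹ μ ν)) * H μ ν := by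
  classical
  set Q0 : ℝ := ∑ μ, ∑ ν, g μ ν * j μ * j ν with hQ0def
  set QH : ℝ := ∑ μ, ∑ ν, H μ ν * j μ * j ν with hQHdef
  set r0 : ℝ := Real.sqrt (-g.det) with hr0def
  set s0 : ℝ := Real.sqrt (-Q0) with hs0def
  have hrpos : 0 < r0 := Real.sqrt_pos.2 (by linarith)
  have hspos : 0 < s0 := Real.sqrt_pos.2 (by linarith)
  have hr2 : r0 ^ 2 = -g.det := Real.sq_sqrt (by linarith)
  have hs2 : s0 ^ 2 = -Q0 := Real.sq_sqrt (by linarith)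
  set M : Matrix (Fin 4) (Fin 4) ℝ := g⁻¹ * H with hMdef
  set tr : ℝ := Matrix.trace M with htrdef
  have hfac : ∀ t : ℝ, g + t • H = g * (1 + t • M) := by
    intro t
    rw [Matrix.mul_add, Matrix.mul_one, Matrix.mul_smul, hMdef, ← Matrix.mul_assoc,
      Matrix.mul_nonsing_inv g hinv, Matrix.one_mul]
  set P : Polynomial ℝ :=
    (Matrix.det (1 + (Polynomial.X : Polynomial ℝ) • M.map Polynomial.C)).divX.divX with hPdef
  have hDfun : (fun t : ℝ => (g + t • H).det)
      = fun t : ℝ => g.det * (1 + tr * t + Polynomial.eval t P * t ^ 2) := by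
    funext t
    rw [hfac t, Matrix.det_mul, Matrix.det_one_add_smul]
  have hD : HasDerivAt (fun t : ℝ => (g + t • H).det) (g.det * tr) 0 := by
    rw [hDfun]
    have h1 : HasDerivAt (fun t : ℝ => Polynomial.eval t P * t ^ 2)
        (Polynomial.eval 0 P.derivative * 0 ^ 2 + Polynomial.eval 0 P * (2 * 0 ^ 1)) 0 :=
      (P.hasDerivAt 0).mul (hasDerivAt_pow 2 0)
    have h2 := (((hasDerivAt_const (0:ℝ) (1:ℝ)).add
      ((hasDerivAt_id (0:ℝ)).const_mul tr)).add h1).const_mul g.det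
    simpa using h2
  have hQfun : (fun t : ℝ => ∑ μ, ∑ ν, (g + t • H) μ ν * j μ * j ν)
      = fun t : ℝ => Q0 + t * QH := by
    funext t
    rw [hQ0def, hQHdef, Finset.mul_sum]
    rw [← Finset.sum_add_distrib]
    refine Finset.sum_congr rfl fun μ _ => ?_
    rw [Finset.mul_sum, ← Finset.sum_add_distrib]
    refine Finset.sum_congr rfl fun ν _ => ?_
    simp [Matrix.add_apply, Matrix.smul_apply, smul_eq_mul]
    ring
  have hQ : HasDerivAt (fun t : ℝ => ∑ μ, ∑ ν, (g + t • H) μ ν * j μ * j ν) QH 0 := by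
    rw [hQfun]
    exact ((hasDerivAt_const (0:ℝ) Q0).add ((hasDerivAt_id (0:ℝ)).mul_const QH)).congr_deriv (by simp)
  have hg0 : g + (0:ℝ) • H = g := by simp
  have hr : HasDerivAt (fun t : ℝ => Real.sqrt (-(g + t • H).det))
      (-(g.det * tr) / (2 * r0)) 0 := by
    have h := (hD.neg).sqrt (by simp only [Pi.neg_apply, hg0]; intro h; rw [neg_eq_zero] at h; linarith)
    simpa [hg0, hr0def] using h
  have hs : HasDerivAt (fun t : ℝ => Real.sqrt (-(∑ μ, ∑ ν, (g + t • H) μ ν * j μ * j ν)))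
      (-QH / (2 * s0)) 0 := by
    have h := (hQ.neg).sqrt (by
      simp only [Pi.neg_apply, zero_smul, add_zero]; intro h; rw [neg_eq_zero] at h
      exact absurd h (by rw [← hQ0def]; intro h2; linarith))
    simpa [hg0, hs0def, hQ0def] using h
  -- rest density
  have hn0 : nOf j g = s0 / r0 := rfl
  have hn0pos : 0 < nOf j g := by rw [hn0]; positivity
  set r' : ℝ := -(g.det * tr) / (2 * r0) with hr'def
  set s' : ℝ := -QH / (2 * s0) with hs'def
  set n' : ℝ := (s' * r0 - s0 * r') / r0 ^ 2 with hn'def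
  have hn : HasDerivAt (fun t : ℝ => nOf j (g + t • H)) n' 0 := by
    simp only [nOf]
    have h := hs.div hr (x := (0:ℝ)) (by rw [hg0]; positivity)
    rw [hn'def, hr'def, hs'def]
    simpa [hg0, hr0def, Pi.div_def] using h
  have he2 : HasDerivAt e (deriv e (nOf j g)) (nOf j (g + (0:ℝ) • H)) := by
    rw [hg0]; exact he.hasDerivAt
  have hen : HasDerivAt (fun t : ℝ => e (nOf j (g + t • H)))
      (deriv e (nOf j g) * n') 0 := he2.comp 0 hn
  have hL := ((hr.neg.mul hn).mul hen).deriv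
  rw [show deriv (fun t : ℝ =>
        -Real.sqrt (-(g + t • H).det) * nOf j (g + t • H) * e (nOf j (g + t • H))) 0 = _ from hL]
  simp only [Pi.neg_apply, Pi.mul_apply]
  -- clean values at 0
  rw [hg0]
  -- abbreviate
  set E : ℝ := deriv e (nOf j g) with hEdef
  set Ee : ℝ := e (nOf j g) with hEedef
  -- the RHS sum
  have hS : ∑ μ, ∑ ν, g⁻¹ μ ν * H μ ν = tr := by
    rw [htrdef, hMdef, Matrix.trace]
    simp only [Matrix.diag, Matrix.mul_apply]
    exact Finset.sum_congr rfl fun μ _ => Finset.sum_congr rfl fun ν _ => by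
      rw [hH.apply μ ν]
  have hterm : ∀ μ ν : Fin 4,
      (r0 * ((nOf j g * Ee + (nOf j g) ^ 2 * E) * uOf j g μ * uOf j g ν
        + (nOf j g) ^ 2 * E * g⁻¹ μ ν)) * H μ ν
      = ((nOf j g * Ee + (nOf j g) ^ 2 * E) / (r0 * (nOf j g) ^ 2))
          * (H μ ν * j μ * j ν)
        + (r0 * ((nOf j g) ^ 2 * E)) * (g⁻¹ μ ν * H μ ν) := by
    intro μ ν
    simp only [uOf, ← hr0def]
    field_simp
  have hsum : ∑ μ, ∑ ν,
      (r0 * ((nOf j g * Ee + (nOf j g) ^ 2 * E) * uOf j g μ * uOf j g ν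
        + (nOf j g) ^ 2 * E * g⁻¹ μ ν)) * H μ ν
      = ((nOf j g * Ee + (nOf j g) ^ 2 * E) / (r0 * (nOf j g) ^ 2)) * QH
        + (r0 * ((nOf j g) ^ 2 * E)) * tr := by
    rw [← hS, hQHdef, Finset.mul_sum, Finset.mul_sum, ← Finset.sum_add_distrib]
    refine Finset.sum_congr rfl fun μ _ => ?_
    rw [Finset.mul_sum, Finset.mul_sum, ← Finset.sum_add_distrib]
    exact Finset.sum_congr rfl fun ν _ => hterm μ ν
  rw [hsum]
  -- final scalar algebra
  have hgdet : g.det = -(r0 ^ 2) := by rw [hr2]; ring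
  rw [hn0] at *
  rw [hn'def, hs'def, hr'def, hgdet]
  have hrne : r0 ≠ 0 := ne_of_gt hrpos
  have hsne : s0 ≠ 0 := ne_of_gt hspos
  field_simp
  rw [Real.sqrt_sq hrpos.le]
  ring
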